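/- The vectors v₁ = (1,1,-∞), v₂ = (1,-∞,1), v₃ = (-∞,1,1) in T^(3) are tropically dependent, yet none of them can be written as a tropical linear combination (with coefficients in T) of the other two. -/

import Mathlib

/-- The extended tropical semiring `T = ℝ ∪ ℝ^ν ∪ {-∞}`:
`bot` is `-∞`, `real a` is the real element `a`, `ghost a` is `a^ν`. -/
inductive T : Type where
  | bot : T
  | real : ℝ → T
  | ghost : ℝ → T

namespace T

noncomputable section

/-- Tropical addition `⊕` (max with respect to `-∞ ≺ a ≺ a^ν`, ties become ghosts). -/
def add : T → T → T
  | bot, y => y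
  | real a, bot => real a
  | ghost a, bot => ghost a
  | real a, real b => if a < b then real b else if b < a then real a else ghost a
  | real a, ghost b => if b < a then real a else ghost b
  | ghost a, real b => if a < b then real b else ghost a
  | ghost a, ghost b => ghost (max a b)

/-- Tropical multiplication `⊙` (addition of underlying reals, ghosts absorb). -/
def mul : T → T → T
  | bot, _ => bot
  | real _, bot => bot
  | ghost _, bot => bot
  | real a, real b => real (a + b)
  | real a, ghost b => ghost (a + b)
  | ghost a, real b => ghost (a + b)
  | ghost a, ghost b => ghost (a + b)

/-- The total order `⪯` on `T`: `-∞` least, order of reals, `a ≺ a^ν`. -/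
def le : T → T → Prop
  | bot, _ => True
  | real _, bot => False
  | real a, real b => a ≤ b
  | real a, ghost b => a ≤ b
  | ghost _, bot => False
  | ghost a, real b => a < b
  | ghost a, ghost b => a ≤ b

/-- Membership in the ghost ideal `U̅ = U ∪ {-∞}`. -/
def IsGhost : T → Prop
  | bot => True
  | real _ => False
  | ghost _ => True

/-- Membership in `ℝ ∪ {-∞}` (non-ghost elements). -/
def RealOrBot : T → Prop
  | bot => True
  | real _ => True
  | ghost _ => False

/-- The ghost map `ν`. -/
def nu : T → T
  | bot => bot
  | real a => ghost a
  | ghost a => ghost a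

/-- Tropical sum of a list. -/
def sumList : List T → T := fun l => l.foldr add bot

/-- Tropical sum over a finite index set. -/
def sum {α : Type*} (s : Finset α) (f : α → T) : T := sumList (s.toList.map f)

/-- Tropical product of a list. -/
def prodList : List T → T := fun l => l.foldr mul (real 0)

/-- The weight of a permutation `σ` in a matrix: `a_{1,σ(1)} ⊙ ⋯ ⊙ a_{n,σ(n)}`. -/
def permProd {n : ℕ} (A : Matrix (Fin n) (Fin n) T) (σ : Equiv.Perm (Fin n)) : T :=
  prodList ((List.finRange n).map fun i => A i (σ i))

/-- The tropical determinant (permanent) `|A| = ⨁_σ a_{1,σ(1)} ⊙ ⋯ ⊙ a_{n,σ(n)}`. -/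
def det {n : ℕ} (A : Matrix (Fin n) (Fin n) T) : T :=
  sum (Finset.univ : Finset (Equiv.Perm (Fin n))) (fun σ => permProd A σ)

/-- Tropical dependence of a family of `m` vectors in `T^(n)`:
some tropical linear combination with coefficients in `ℝ ∪ {-∞}`, not all `-∞`,
lands in the ghost part `U̅^(n)`. -/
def Dependent {m n : ℕ} (v : Fin m → Fin n → T) : Prop :=
  ∃ α : Fin m → T, (∀ i, RealOrBot (α i)) ∧ (∃ i, α i ≠ bot) ∧
    ∀ j, IsGhost (sum Finset.univ fun i => mul (α i) (v i j))

/-- The tropical rank: maximal number of tropically independent rows. -/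
def rk {m n : ℕ} (A : Matrix (Fin m) (Fin n) T) : ℕ :=
  sSup {k | ∃ f : Fin k → Fin m, Function.Injective f ∧ ¬ Dependent (fun i => A (f i))}

end

end T

namespace T

noncomputable def w₁ : Fin 3 → T := ![real 1, real 1, bot]
noncomputable def w₂ : Fin 3 → T := ![real 1, bot, real 1]
noncomputable def w₃ : Fin 3 → T := ![bot, real 1, real 1]

/-- `w₁, w₂, w₃` are tropically dependent, yet none is a tropical
linear combination of the other two. -/
lemma add_left_comm' (a b c : T) : add a (add b c) = add b (add a c) := by
  rcases a with _|a|a <;> rcases b with _|b|b <;> rcases c with _|c|c <;>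
    simp only [add, max_def] <;>
    repeat' first
      | rfl
      | split_ifs
      | simp only [add, max_def]
      | (congr 1; linarith)
      | (exfalso; linarith)

lemma univ_toList_perm : (Finset.univ : Finset (Fin 3)).toList.Perm [0, 1, 2] := by
  have h : ((Finset.univ : Finset (Fin 3)).toList : Multiset (Fin 3)) = ↑[(0:Fin 3), 1, 2] := by
    rw [Finset.toList, Multiset.coe_toList]; decide
  exact Multiset.coe_eq_coe.mp h

instance : LeftCommutative add := ⟨fun a b c => add_left_comm' a b c⟩

lemma sum3 (f : Fin 3 → T) :
    sum Finset.univ f = add (f 0) (add (f 1) (add (f 2) bot)) := by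
  show sumList ((Finset.univ : Finset (Fin 3)).toList.map f) = _
  have hp : ((Finset.univ : Finset (Fin 3)).toList.map f).Perm [f 0, f 1, f 2] :=
    univ_toList_perm.map f
  have := hp.foldr_eq (f := add) bot
  simpa [sumList] using this

lemma add_eq_bot {x y : T} (h : add x y = bot) : x = bot ∧ y = bot := by
  rcases x with _|a|a <;> rcases y with _|b|b <;> simp only [add] at h <;>
    first
      | exact ⟨rfl, rfl⟩
      | exact T.noConfusion h
      | (split_ifs at h <;> exact T.noConfusion h)

lemma mul_real_eq_bot {β : T} {a : ℝ} (h : mul β (real a) = bot) : β = bot := by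
  rcases β with _|b|b <;> first | rfl | exact T.noConfusion (h : _)

lemma mul_bot (β : T) : mul β bot = bot := by rcases β <;> rfl

theorem stmt4 :
    Dependent ![w₁, w₂, w₃] ∧
    (¬ ∃ β₁ β₂ : T, ∀ j, w₁ j = add (mul β₁ (w₂ j)) (mul β₂ (w₃ j))) ∧
    (¬ ∃ β₁ β₂ : T, ∀ j, w₂ j = add (mul β₁ (w₁ j)) (mul β₂ (w₃ j))) ∧
    (¬ ∃ β₁ β₂ : T, ∀ j, w₃ j = add (mul β₁ (w₁ j)) (mul β₂ (w₂ j))) := by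
  refine ⟨⟨fun _ => real 0, fun i => trivial, ⟨0, by simp⟩, ?_⟩, ?_, ?_, ?_⟩
  · intro j
    rw [sum3]
    fin_cases j <;>
      simp only [w₁, w₂, w₃, Matrix.cons_val_zero, Matrix.cons_val_one, Matrix.cons_val_two,
        Matrix.head_cons, Matrix.tail_cons, Matrix.cons_val_fin_one, Fin.isValue] <;>
      norm_num [mul, add, IsGhost]
  · rintro ⟨β₁, β₂, h⟩
    have h2 := (h 2).symm
    simp only [w₁, w₂, w₃, Matrix.cons_val_two, Matrix.tail_cons, Matrix.head_cons] at h2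
    obtain ⟨hb1, hb2⟩ := add_eq_bot h2
    have := h 0
    rw [mul_real_eq_bot hb1] at this
    simp only [w₁, w₂, w₃, Matrix.cons_val_zero, mul_bot, add] at this
    exact T.noConfusion this
  · rintro ⟨β₁, β₂, h⟩
    have h2 := (h 1).symm
    simp only [w₁, w₂, w₃, Matrix.cons_val_one, Matrix.head_cons] at h2
    obtain ⟨hb1, hb2⟩ := add_eq_bot h2
    have := h 0
    rw [mul_real_eq_bot hb1] at this
    simp only [w₁, w₂, w₃, Matrix.cons_val_zero, mul_bot, add] at this
    exact T.noConfusion this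
  · rintro ⟨β₁, β₂, h⟩
    have h2 := (h 0).symm
    simp only [w₁, w₂, w₃, Matrix.cons_val_zero] at h2
    obtain ⟨hb1, hb2⟩ := add_eq_bot h2
    have := h 1
    rw [mul_real_eq_bot hb1] at this
    simp only [w₁, w₂, w₃, Matrix.cons_val_one, Matrix.head_cons, Matrix.cons_val_zero, mul_bot, add] at this
    exact T.noConfusion this

end T
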